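/- Let (c,u) be a travelling-wave solution of the one-species free-boundary problem such that u is globally Lipschitz, ∂ₓu < 0 on Ω = {u > 0}, the free boundary is Γ = {(φ(y), y) : y < 0} with φ real-analytic and locally Lipschitz, (0,0) lies in the closure of Γ, and φ is Lipschitz on (-∞,-1]. Then the liminf of u(X) over points X = (x,y) ∈ Ω, as y → -∞ and dist(X, Γ) → +∞, equals 1; that is, for every ε > 0 there is R > 0 such that u(x,y) ≥ 1 - ε whenever u(x,y) > 0, y ≤ -R and dist((x,y), Γ) ≥ R. -/

import Mathlib

open Real Filter Topology Set Asymptotics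

noncomputable section

/-- Partial derivative in the first (horizontal) variable. -/
def pdx (u : ℝ → ℝ → ℝ) (x y : ℝ) : ℝ := deriv (fun t => u t y) x

/-- Partial derivative in the second (vertical) variable. -/
def pdy (u : ℝ → ℝ → ℝ) (x y : ℝ) : ℝ := deriv (fun t => u x t) y

/-- Second partial derivative in the first variable. -/
def pdxx (u : ℝ → ℝ → ℝ) (x y : ℝ) : ℝ := deriv (fun t => pdx u t y) x

/-- Second partial derivative in the second variable. -/
def pdyy (u : ℝ → ℝ → ℝ) (x y : ℝ) : ℝ := deriv (fun t => pdy u x t) y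

/-- The closed lower half-plane `H = {(x,y) : y ≤ 0}`. -/
def lowerH : Set (ℝ × ℝ) := {p | p.2 ≤ 0}

/-- The positivity set `Ω = {u > 0}` inside the closed lower half-plane. -/
def posSet (u : ℝ → ℝ → ℝ) : Set (ℝ × ℝ) := {p | p.2 ≤ 0 ∧ 0 < u p.1 p.2}

/-- The free boundary `Γ = ∂Ω ∩ {y < 0}`. -/
def freeBdry (u : ℝ → ℝ → ℝ) : Set (ℝ × ℝ) :=
  frontier (posSet u) ∩ {p | p.2 < 0}

/-- A travelling-wave solution of the one-species free-boundary problem in the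
lower half-plane, with diffusivities `d` (field), `D` (road), exchange parameter `μ`
and speed `c`. -/
structure OneSpeciesTW (d D μ c : ℝ) (u : ℝ → ℝ → ℝ) : Prop where
  c_pos : 0 < c
  cont : ContinuousOn (fun p : ℝ × ℝ => u p.1 p.2) lowerH
  mem01 : ∀ x y : ℝ, y ≤ 0 → u x y ∈ Icc (0:ℝ) 1
  relOpen : ∃ V : Set (ℝ × ℝ), IsOpen V ∧ posSet u = V ∩ lowerH
  smooth : ContDiffOn ℝ 2 (fun p : ℝ × ℝ => u p.1 p.2) (posSet u ∩ {p | p.2 < 0})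
  pde : ∀ p ∈ posSet u ∩ {p : ℝ × ℝ | p.2 < 0},
      -d * (pdxx u p.1 p.2 + pdyy u p.1 p.2) + c * pdx u p.1 p.2 = 0
  grad_ext : ∃ G₁ G₂ : ℝ × ℝ → ℝ,
      ContinuousOn G₁ (posSet u ∪ freeBdry u) ∧
      ContinuousOn G₂ (posSet u ∪ freeBdry u) ∧
      (∀ p ∈ posSet u ∩ {p : ℝ × ℝ | p.2 < 0},
        G₁ p = pdx u p.1 p.2 ∧ G₂ p = pdy u p.1 p.2) ∧
      (∀ p ∈ freeBdry u, (G₁ p) ^ 2 + (G₂ p) ^ 2 = 1)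
  road_diffx : ∀ x : ℝ, 0 < u x 0 → DifferentiableAt ℝ (fun t => u t 0) x
  road_diffxx : ∀ x : ℝ, 0 < u x 0 → DifferentiableAt ℝ (fun t => pdx u t 0) x
  road_diffy : ∀ x : ℝ, 0 < u x 0 → DifferentiableAt ℝ (fun t => u x t) 0
  road : ∀ x : ℝ, 0 < u x 0 →
      -D * pdxx u x 0 + c * pdx u x 0 + (1/μ) * pdy u x 0 = 0
  lim_left : ∀ ε > 0, ∃ M : ℝ, ∀ x ≤ M, ∀ y ≤ (0:ℝ), |u x y - 1| < ε
  lim_right : ∀ y ≤ (0:ℝ), Tendsto (fun x => u x y) atTop (𝓝 0)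


private lemma sd_test {g : ℝ → ℝ} {a L : ℝ} (hmax : IsLocalMax g a)
    (hdiff : ∀ᶠ t in 𝓝 a, DifferentiableAt ℝ g t)
    (hL : HasDerivAt (deriv g) L a) : L ≤ 0 := by
  by_contra hL0
  push_neg at hL0
  have h0 : deriv g a = 0 := hmax.deriv_eq_zero
  have hslope : Tendsto (slope (deriv g) a) (𝓝[≠] a) (𝓝 L) :=
    hasDerivAt_iff_tendsto_slope.mp hL
  have hpos : ∀ᶠ t in 𝓝[>] a, 0 < deriv g t := by
    have h1 : ∀ᶠ t in 𝓝[≠] a, 0 < slope (deriv g) a t :=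
      hslope.eventually (eventually_gt_nhds hL0)
    have h2 : ∀ᶠ t in 𝓝[>] a, 0 < slope (deriv g) a t :=
      h1.filter_mono (nhdsWithin_mono a (fun t ht => ne_of_gt ht))
    filter_upwards [h2, self_mem_nhdsWithin] with t ht ht'
    have heq : slope (deriv g) a t = (deriv g t) / (t - a) := by
      simp [slope, h0]; ring
    rw [heq] at ht
    have h3 : 0 < t - a := sub_pos.mpr ht'
    have := mul_pos ht h3
    rwa [div_mul_cancel₀] at this
    exact ne_of_gt h3
  obtain ⟨b, hb, hIoo⟩ := mem_nhdsGT_iff_exists_Ioo_subset.mp hpos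
  obtain ⟨δ₁, hδ₁, hball₁⟩ := Metric.eventually_nhds_iff.mp hdiff
  obtain ⟨δ₀, hδ₀, hball₀⟩ := Metric.eventually_nhds_iff.mp hmax
  set e := min (min δ₁ δ₀) (b - a) with he
  have hepos : 0 < e := by
    simp only [he, lt_min_iff]
    exact ⟨⟨hδ₁, hδ₀⟩, sub_pos.mpr hb⟩
  set b' := a + e/2 with hb'
  have hab' : a < b' := by simp [hb']; linarith
  have hsub : Icc a b' ⊆ Metric.ball a δ₁ := by
    intro t ht
    simp only [Metric.mem_ball, Real.dist_eq, abs_sub_lt_iff]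
    constructor
    · have h3 : t ≤ a + e/2 := ht.2
      have h4 : e < 2*δ₁ := by
        have : e ≤ δ₁ := le_trans (min_le_left _ _) (min_le_left _ _)
        linarith
      linarith
    · linarith [ht.1, hδ₁]
  have hmono : StrictMonoOn g (Icc a b') := by
    apply strictMonoOn_of_deriv_pos (convex_Icc a b')
    · intro t ht
      exact (hball₁ (hsub ht)).continuousAt.continuousWithinAt
    · intro t ht
      rw [interior_Icc] at ht
      apply hIoo
      constructor
      · exact ht.1
      · have h5 : e ≤ b - a := min_le_right _ _
        have h6 : t < a + e/2 := ht.2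
        linarith
  have h5 : g a < g b' :=
    hmono (left_mem_Icc.mpr (le_of_lt hab')) (right_mem_Icc.mpr (le_of_lt hab')) hab'
  have h6 : g b' ≤ g a := by
    apply hball₀
    simp only [Real.dist_eq, hb']
    rw [abs_of_pos (by linarith)]
    have h7 : e ≤ δ₀ := le_trans (min_le_left _ _) (min_le_right _ _)
    linarith
  linarith

private lemma aux_Wle {A B eps : ℝ} (h1 : 0 < A) (h2 : 0 < B) (heps : 0 < 1 - eps) :
    (1-eps)*(1 - A - B) ≤ 1 - eps := by nlinarith

private lemma aux_Wnonpos {A B eps : ℝ} (h1 : 1 ≤ A) (h2 : 0 < B) (heps : 0 < 1 - eps) :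
    (1-eps)*(1 - A - B) ≤ 0 := by nlinarith

private lemma aux_Wnonpos' {A B eps : ℝ} (h1 : 0 < A) (h2 : 1 ≤ B) (heps : 0 < 1 - eps) :
    (1-eps)*(1 - A - B) ≤ 0 := by nlinarith

private lemma aux_WX0 {A B eps t : ℝ} (hA : A ≤ t) (hB : B ≤ t) (heps : 0 < 1 - eps) :
    (1-eps)*(1 - 2*t) ≤ (1-eps)*(1 - A - B) := by nlinarith

private lemma aux_final {ε : ℝ} (h1 : 0 < ε) (h2 : ε < 1) :
    1 - ε ≤ (1-ε/4)*(1 - 2*(ε/4)) := by nlinarith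

private lemma aux_sig {σ e : ℝ} (hσ : 0 < σ) (he : e ≤ 1) : σ*(e-1) ≤ 0 := by nlinarith

private lemma aux_eta {η t : ℝ} (h : 0 < η) (ht : t ≤ 0) : η*t ≤ 0 := by nlinarith

private lemma aux_eta2 {θ y : ℝ} (hθ : 0 < θ) (hy : y ≤ -1) : -θ/2 ≤ θ/(2*(1-y)) * y := by
  rw [div_mul_eq_mul_div, le_div_iff₀ (by linarith : (0:ℝ) < 2*(1-y))]
  nlinarith

private lemma aux_sig2 {σ e : ℝ} (hσ : 0 < σ) (he : 0 < e) : -σ ≤ σ*(e-1) := by nlinarith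

private lemma aux_drop {eps A B : ℝ} (heps : 0 < 1-eps) (hB : 0 < B) :
    (1-eps)*(1-A-B) ≤ (1-eps)*(1-A) := by nlinarith

private lemma aux_neg {eps A θ : ℝ} (h : θ ≤ (1-eps)*(1-A)) (hA : 1 ≤ A)
    (heps : 0 < 1-eps) (hθ : 0 < θ) : False := by nlinarith
set_option maxHeartbeats 1000000 in
/-- Proposition 4.2: `u` tends to 1 deep inside the positivity set.
For a travelling wave `(c,u)` of the one-species problem with `u` globally Lipschitz,
`∂ₓu < 0` on `Ω`, free boundary the locally Lipschitz analytic graph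
`Γ = {(φ(y),y) : y < 0}`, `(0,0) ∈ closure Γ`, and `φ` Lipschitz on `(-∞,-1]`:
the liminf of `u` over points of `Ω` with `y → -∞` and `dist(·,Γ) → +∞` is `1`,
i.e. for every `ε > 0` there is `R > 0` such that `u(x,y) ≥ 1 - ε` whenever
`u(x,y) > 0`, `y ≤ -R` and `dist((x,y),Γ) ≥ R`. -/
theorem liminf_far_from_free_boundary
    (d D μ c : ℝ) (hd : 0 < d) (hD : 0 < D) (hμ : 0 < μ)
    (u : ℝ → ℝ → ℝ) (hu : OneSpeciesTW d D μ c u)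
    (hLip : ∃ K : NNReal, LipschitzOnWith K (fun p : ℝ × ℝ => u p.1 p.2) lowerH)
    (hmono : ∀ p ∈ posSet u, pdx u p.1 p.2 < 0)
    (φ : ℝ → ℝ)
    (hφa : AnalyticOnNhd ℝ φ (Iio 0))
    (hφl : ∀ y < (0:ℝ), ∃ ε > 0, ∃ K : NNReal, LipschitzOnWith K φ (Metric.ball y ε))
    (hΓ : freeBdry u = {p : ℝ × ℝ | ∃ y < (0:ℝ), p = (φ y, y)})
    (h0 : ((0:ℝ), (0:ℝ)) ∈ closure (freeBdry u))
    (hφLip : ∃ K : NNReal, LipschitzOnWith K φ (Iic (-1))) :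
    ∀ ε > (0:ℝ), ∃ R > (0:ℝ), ∀ x y : ℝ, y ≤ -R → 0 < u x y →
      R ≤ Metric.infDist (x, y) (freeBdry u) → 1 - ε ≤ u x y := by
  intro ε hε
  -- trivial case ε ≥ 1
  by_cases hε1 : 1 ≤ ε
  · refine ⟨1, one_pos, fun x y hy hup _ => ?_⟩
    have h0 := (hu.mem01 x y (by linarith)).1
    linarith
  push_neg at hε1
  obtain ⟨K, hK⟩ := hφLip
  obtain ⟨V, hVopen, hVeq⟩ := hu.relOpen
  have hKnn : (0:ℝ) ≤ (K:ℝ) := K.coe_nonneg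
  have hOpenNeg : IsOpen {p : ℝ×ℝ | p.2 < 0} := isOpen_lt continuous_snd continuous_const
  have hVsub : V ∩ {p : ℝ×ℝ | p.2 < 0} ⊆ posSet u := by
    intro p hp
    rw [hVeq]
    exact ⟨hp.1, show p.2 ≤ 0 from le_of_lt hp.2⟩
  -- u vanishes on the free boundary
  have hbd0 : ∀ t, t < 0 → u (φ t) t = 0 := by
    intro t ht
    have hmem : ((φ t, t) : ℝ × ℝ) ∈ freeBdry u := by rw [hΓ]; exact ⟨t, ht, rfl⟩
    by_contra hne
    have h0 : 0 ≤ u (φ t) t := (hu.mem01 (φ t) t (le_of_lt ht)).1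
    have hpos : 0 < u (φ t) t := lt_of_le_of_ne h0 (Ne.symm hne)
    have hps : ((φ t, t) : ℝ×ℝ) ∈ posSet u := ⟨le_of_lt ht, hpos⟩
    have hV : ((φ t, t) : ℝ×ℝ) ∈ V := by rw [hVeq] at hps; exact hps.1
    have hint : ((φ t, t) : ℝ×ℝ) ∈ interior (posSet u) :=
      mem_interior.mpr ⟨V ∩ {p : ℝ×ℝ | p.2 < 0}, hVsub, hVopen.inter hOpenNeg, ⟨hV, ht⟩⟩
    exact hmem.1.2 hint
  -- the positivity set lies to the left of the free boundary
  have hT1 : ∀ x t, t < 0 → 0 < u x t → x < φ t := by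
    intro x t ht hpos
    by_contra hle
    push_neg at hle
    have hne : φ t ≠ x := by
      intro h
      have h2 := hbd0 t ht
      rw [h] at h2
      linarith
    have hlt : φ t < x := lt_of_le_of_ne hle hne
    have hcontx : Continuous (fun s => u s t) := by
      have h1 : Continuous (fun s : ℝ => ((s, t) : ℝ×ℝ)) := by fun_prop
      have h2 : ∀ s : ℝ, ((s, t) : ℝ×ℝ) ∈ lowerH := fun s => le_of_lt ht
      exact hu.cont.comp_continuous h1 h2
    set Z := {s : ℝ | s ∈ Icc (φ t) x ∧ u s t = 0} with hZ
    have hZne : Z.Nonempty := ⟨φ t, ⟨le_rfl, le_of_lt hlt⟩, hbd0 t ht⟩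
    have hZbdd : BddAbove Z := ⟨x, fun s hs => hs.1.2⟩
    have hZclosed : IsClosed Z := by
      have heq : Z = Icc (φ t) x ∩ (fun s => u s t) ⁻¹' {0} := by
        ext s; simp [hZ]
      rw [heq]
      exact isClosed_Icc.inter (isClosed_singleton.preimage hcontx)
    set t₁ := sSup Z with ht₁
    have ht₁Z : t₁ ∈ Z := hZclosed.csSup_mem hZne hZbdd
    have ht₁x : t₁ < x := by
      rcases lt_or_eq_of_le ht₁Z.1.2 with h | h
      · exact h
      · exfalso; have h2 := ht₁Z.2; rw [h] at h2; linarith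
    have hpos' : ∀ s, t₁ < s → s ≤ x → 0 < u s t := by
      intro s h1 h2
      have h0 : 0 ≤ u s t := (hu.mem01 s t (le_of_lt ht)).1
      rcases eq_or_lt_of_le h0 with he | hl
      · exfalso
        have hsZ : s ∈ Z := ⟨⟨le_trans ht₁Z.1.1 (le_of_lt h1), h2⟩, he.symm⟩
        exact absurd (le_csSup hZbdd hsZ) (not_le.mpr h1)
      · exact hl
    have hanti : StrictAntiOn (fun s => u s t) (Icc t₁ x) := by
      apply strictAntiOn_of_deriv_neg (convex_Icc t₁ x) hcontx.continuousOn
      intro s hs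
      rw [interior_Icc] at hs
      exact hmono (s, t) ⟨le_of_lt ht, hpos' s hs.1 (le_of_lt hs.2)⟩
    have hfin := hanti (left_mem_Icc.mpr (le_of_lt ht₁x)) (right_mem_Icc.mpr (le_of_lt ht₁x)) ht₁x
    simp only at hfin
    rw [ht₁Z.2] at hfin
    linarith
  -- quantities from the uniform left limit
  have hε₁pos : (0:ℝ) < ε/4 := by linarith
  obtain ⟨M₁, hM₁⟩ := hu.lim_left (ε/4) hε₁pos
  set ε₁ : ℝ := ε/4 with hε₁def
  have hε₁lt : ε₁ < 1/4 := by rw [hε₁def]; linarith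
  have hφlow : ∀ t, t < 0 → M₁ < φ t := by
    intro t ht
    have h1 := hM₁ M₁ le_rfl t (le_of_lt ht)
    have h2 : 1 - ε₁ < u M₁ t := by
      have := abs_lt.mp h1
      linarith [this.1]
    exact hT1 M₁ t ht (by linarith)
  -- Lipschitz distance control for φ
  have hKdist : ∀ s t : ℝ, s ≤ -1 → t ≤ -1 → |φ s - φ t| ≤ K * |s - t| := by
    intro s t hs ht
    have := hK.dist_le_mul s hs t ht
    simpa [Real.dist_eq] using this
  set C₀ : ℝ := |M₁| + |φ (-1)| + 1 with hC₀def
  set s₀ : ℝ := c / (d * (1 + (K:ℝ)^2)) with hs₀def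
  have hdk : (0:ℝ) < d * (1 + (K:ℝ)^2) := by positivity
  have hs₀pos : 0 < s₀ := div_pos hu.c_pos hdk
  have hs₀id : s₀ * (d * (1 + (K:ℝ)^2)) = c := div_mul_cancel₀ c (ne_of_gt hdk)
  set R : ℝ := max 1 (C₀ - Real.log (ε/4) / s₀) with hRdef
  have hR1 : (1:ℝ) ≤ R := le_max_left _ _
  have hRδ : Real.exp (s₀*(C₀ - R)) ≤ ε/4 := by
    have h1 : C₀ - Real.log (ε/4) / s₀ ≤ R := le_max_right _ _
    have h2 : C₀ - R ≤ Real.log (ε/4) / s₀ := by linarith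
    have h3 : s₀ * (C₀ - R) ≤ Real.log (ε/4) := by
      rw [div_eq_mul_inv] at h2
      calc s₀ * (C₀ - R) ≤ s₀ * (Real.log (ε/4) * s₀⁻¹) :=
            mul_le_mul_of_nonneg_left h2 (le_of_lt hs₀pos)
        _ = Real.log (ε/4) := by field_simp
    calc Real.exp (s₀*(C₀ - R)) ≤ Real.exp (Real.log (ε/4)) := Real.exp_le_exp.mpr h3
      _ = ε/4 := Real.exp_log hε₁pos
  refine ⟨R, lt_of_lt_of_le one_pos hR1, ?_⟩
  intro x₀ y₀ hy₀R hu₀pos hdist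
  have hy₀1 : y₀ ≤ -1 := by linarith
  have hy₀0 : y₀ < 0 := by linarith
  have hx₀φ : x₀ < φ y₀ := hT1 x₀ y₀ hy₀0 hu₀pos
  have hgap : R ≤ φ y₀ - x₀ := by
    have hmem : ((φ y₀, y₀) : ℝ×ℝ) ∈ freeBdry u := by rw [hΓ]; exact ⟨y₀, hy₀0, rfl⟩
    have h1 := Metric.infDist_le_dist_of_mem (x := ((x₀,y₀) : ℝ×ℝ)) hmem
    have h2 : dist ((x₀,y₀) : ℝ×ℝ) ((φ y₀, y₀) : ℝ×ℝ) = φ y₀ - x₀ := by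
      rw [Prod.dist_eq]
      simp only [Real.dist_eq, dist_self]
      rw [abs_of_nonpos (by linarith : x₀ - φ y₀ ≤ 0)]
      rw [max_eq_left (by linarith)]
      ring
    rw [h2] at h1
    linarith
  -- the comparison subsolution
  set a₁ : ℝ := s₀ * (-(φ y₀) - K*y₀ + C₀) with ha₁def
  set a₂ : ℝ := s₀ * (-(φ y₀) + K*y₀ + C₀) with ha₂def
  set W : ℝ×ℝ → ℝ := fun p =>
    (1-ε₁) * (1 - Real.exp (s₀*p.1 + K*s₀*p.2 + a₁) - Real.exp (s₀*p.1 - K*s₀*p.2 + a₂))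
    with hWdef
  have hε₁1 : (0:ℝ) < 1 - ε₁ := by linarith
  have hWle : ∀ p : ℝ×ℝ, W p ≤ 1-ε₁ := by
    intro p
    simp only [hWdef]
    exact aux_Wle (Real.exp_pos _) (Real.exp_pos _) hε₁1
  have hW₁ : ∀ p : ℝ×ℝ, 0 ≤ s₀*p.1 + K*s₀*p.2 + a₁ → W p ≤ 0 := by
    intro p hp
    simp only [hWdef]
    exact aux_Wnonpos (Real.one_le_exp hp) (Real.exp_pos _) hε₁1
  have hW₂ : ∀ p : ℝ×ℝ, 0 ≤ s₀*p.1 - K*s₀*p.2 + a₂ → W p ≤ 0 := by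
    intro p hp
    simp only [hWdef]
    exact aux_Wnonpos' (Real.exp_pos _) (Real.one_le_exp hp) hε₁1
  -- main comparison estimate at the point (x₀, y₀)
  have hcomp : W (x₀, y₀) ≤ u x₀ y₀ := by
    by_contra hlt
    push_neg at hlt
    set θ : ℝ := (W (x₀,y₀) - u x₀ y₀)/2 with hθdef
    have hθpos : 0 < θ := by rw [hθdef]; linarith
    have hθ1 : θ < 1 := by
      have h1 := hWle (x₀,y₀)
      have h2 := (hu.mem01 x₀ y₀ (le_of_lt hy₀0)).1
      rw [hθdef]
      linarith
    have h1y : 0 < 1 - y₀ := by linarith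
    set η : ℝ := θ / (2*(1 - y₀)) with hηdef
    have hηpos : 0 < η := by rw [hηdef]; positivity
    set σ : ℝ := θ/4 with hσdef
    have hσpos : 0 < σ := by rw [hσdef]; linarith
    set F : ℝ×ℝ → ℝ := fun p => (W p - u p.1 p.2) + (η*p.2 + σ*(Real.exp p.2 - 1)) with hFdef
    have hFX₀ : θ ≤ F (x₀,y₀) := by
      have h2 : -θ/2 ≤ η*y₀ := by
        rw [hηdef]
        exact aux_eta2 hθpos hy₀1
      have h3 : -σ ≤ σ*(Real.exp y₀ - 1) := aux_sig2 hσpos (Real.exp_pos y₀)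
      have h4 : W (x₀,y₀) - u x₀ y₀ = 2*θ := by rw [hθdef]; ring
      simp only [hFdef]
      linarith
    set S := closure (posSet u) with hSdef
    have hSsub : S ⊆ lowerH :=
      closure_minimal (fun p hp => hp.1) (isClosed_le continuous_snd continuous_const)
    have hWcont : Continuous W := by rw [hWdef]; fun_prop
    have hrest : Continuous (fun p : ℝ×ℝ => η*p.2 + σ*(Real.exp p.2 - 1)) := by fun_prop
    have hFcont : ContinuousOn F S := by
      rw [hFdef]
      exact ((hWcont.continuousOn).sub (hu.cont.mono hSsub)).add hrest.continuousOn
    set A := S ∩ F ⁻¹' (Ici θ) with hAdef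
    have hX₀S : ((x₀,y₀) : ℝ×ℝ) ∈ S := subset_closure ⟨le_of_lt hy₀0, hu₀pos⟩
    have hX₀A : ((x₀,y₀) : ℝ×ℝ) ∈ A := ⟨hX₀S, hFX₀⟩
    have hAclosed : IsClosed A :=
      hFcont.preimage_isClosed_of_isClosed isClosed_closure isClosed_Ici
    set Tm : ℝ := (θ-1)/η with hTmdef
    have hTmneg : Tm ≤ 0 := by
      rw [hTmdef]
      exact div_nonpos_iff.mpr (Or.inr ⟨by linarith, le_of_lt hηpos⟩)
    set Sx : ℝ := ((K:ℝ)*s₀*(-Tm) + |a₁|)/s₀ with hSxdef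
    have hbound : A ⊆ Icc ((M₁, Tm) : ℝ×ℝ) ((Sx, 0) : ℝ×ℝ) := by
      intro p hp
      obtain ⟨hpS, hpF⟩ := hp
      have hp2 : p.2 ≤ 0 := hSsub hpS
      have hu01 := hu.mem01 p.1 p.2 hp2
      have hW_le := hWle p
      have hσ0 : σ*(Real.exp p.2 - 1) ≤ 0 := aux_sig hσpos (Real.exp_le_one_iff.mpr hp2)
      have hη0 : η*p.2 ≤ 0 := aux_eta hηpos hp2
      have hFp : θ ≤ F p := hpF
      have hFform : F p = (W p - u p.1 p.2) + (η*p.2 + σ*(Real.exp p.2 - 1)) := by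
        rw [hFdef]
      have hTmb : Tm ≤ p.2 := by
        rw [hTmdef, div_le_iff₀ hηpos]
        have := hu01.1
        linarith [hFp, hFform, hW_le, hσ0]
      have hM₁b : M₁ ≤ p.1 := by
        by_contra hc
        push_neg at hc
        have h6 := hM₁ p.1 (le_of_lt hc) p.2 hp2
        have h7 : 1 - ε₁ < u p.1 p.2 := by
          have := abs_lt.mp h6
          linarith [this.1]
        have h8 : F p < θ := by rw [hFform]; linarith
        linarith
      have hSxb : p.1 ≤ Sx := by
        have hWform : W p = (1-ε₁)*(1 - Real.exp (s₀*p.1 + K*s₀*p.2 + a₁)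
            - Real.exp (s₀*p.1 - K*s₀*p.2 + a₂)) := by rw [hWdef]
        have he2 := Real.exp_pos (s₀*p.1 - K*s₀*p.2 + a₂)
        have h8 : F p ≤ W p := by rw [hFform]; linarith [hu01.1]
        have h9 : W p ≤ (1-ε₁)*(1 - Real.exp (s₀*p.1 + K*s₀*p.2 + a₁)) := by
          rw [hWform]
          exact aux_drop hε₁1 he2
        have hE1neg : s₀*p.1 + K*s₀*p.2 + a₁ < 0 := by
          by_contra hcc
          push_neg at hcc
          exact aux_neg (by linarith) (Real.one_le_exp hcc) hε₁1 hθpos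
        rw [hSxdef, le_div_iff₀ hs₀pos]
        have hKp2 : (K:ℝ)*s₀*Tm ≤ K*s₀*p.2 :=
          mul_le_mul_of_nonneg_left hTmb (by positivity)
        have ha1 : -a₁ ≤ |a₁| := neg_le_abs a₁
        linarith
      exact ⟨⟨hM₁b, hTmb⟩, ⟨hSxb, hp2⟩⟩
    have hAcompact : IsCompact A := (isCompact_Icc).of_isClosed_subset hAclosed hbound
    obtain ⟨q, hqA, hqmax⟩ := hAcompact.exists_isMaxOn ⟨(x₀,y₀), hX₀A⟩
      (hFcont.mono (by rw [hAdef]; exact inter_subset_left))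
    have hqS : q ∈ S := hqA.1
    have hqθ : θ ≤ F q := hqA.2
    have hqmaxS : ∀ p ∈ S, F p ≤ F q := by
      intro p hp
      by_cases hpA : p ∈ A
      · exact hqmax hpA
      · have h5 : ¬ θ ≤ F p := fun h => hpA ⟨hp, h⟩
        push_neg at h5
        linarith [hqmax hX₀A, hFX₀]
    have hq2 : q.2 ≤ 0 := hSsub hqS
    have hqu01 := hu.mem01 q.1 q.2 hq2
    rcases eq_or_lt_of_le hq2 with hq20 | hq2neg
    · -- q on the road: contradiction
      have hexpq : Real.exp q.2 = 1 := by rw [hq20, Real.exp_zero]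
      have hFq : F q = W q - u q.1 q.2 := by
        simp only [hFdef]
        rw [hq20]
        norm_num
      rcases le_or_gt q.1 M₁ with hqM | hqM
      · have h6 := hM₁ q.1 hqM q.2 hq2
        have h7 : 1 - ε₁ < u q.1 q.2 := by
          have := abs_lt.mp h6
          linarith [this.1]
        have := hWle q
        linarith [hqθ, hFq.symm.le]
      · have hphi := hKdist y₀ (-1) hy₀1 le_rfl
        have h8 : φ y₀ - φ (-1) ≤ K*(-1 - y₀) := by
          have h9 : φ y₀ - φ (-1) ≤ |φ y₀ - φ (-1)| := le_abs_self _
          have h10 : |y₀ - (-1)| = -1 - y₀ := by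
            rw [abs_of_nonpos (by linarith)]
            ring
          rw [h10] at hphi
          linarith
        have hL₁ : 0 ≤ s₀*q.1 + K*s₀*q.2 + a₁ := by
          rw [ha₁def, hq20]
          have heq : s₀*q.1 + (K:ℝ)*s₀*0 + s₀*(-(φ y₀) - K*y₀ + C₀)
              = s₀*(q.1 - φ y₀ - K*y₀ + C₀) := by ring
          rw [heq]
          apply mul_nonneg (le_of_lt hs₀pos)
          have h11 : -|M₁| ≤ M₁ := neg_abs_le M₁
          have h12 : φ (-1) ≤ |φ (-1)| := le_abs_self _
          rw [hC₀def]
          linarith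
        have h13 := hW₁ q hL₁
        linarith [hqθ, hFq.symm.le, hqu01.1]
    · rcases eq_or_lt_of_le hqu01.1 with hq0 | hqupos
      · -- q on the free boundary: contradiction
        have hqfr : q ∈ freeBdry u := by
          refine ⟨⟨hqS, ?_⟩, hq2neg⟩
          intro hint
          have h5 : q ∈ posSet u := interior_subset hint
          exact absurd h5.2 (by rw [← hq0]; exact lt_irrefl 0)
        rw [hΓ] at hqfr
        obtain ⟨t, ht0, hqt⟩ := hqfr
        have hq1 : q.1 = φ t := by rw [hqt]
        have hq2t : q.2 = t := by rw [hqt]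
        have hC₀pos : (0:ℝ) < C₀ := by rw [hC₀def]; positivity
        have hWq : W q ≤ 0 := by
          rcases le_or_gt t y₀ with hty | hty
          · apply hW₂ q
            rw [hq1, hq2t, ha₂def]
            have hphi := hKdist t y₀ (by linarith) hy₀1
            have h8 : φ y₀ - φ t ≤ K*(y₀ - t) := by
              have h9 : -(φ t - φ y₀) ≤ |φ t - φ y₀| := neg_le_abs _
              have h10 : |t - y₀| = y₀ - t := by
                rw [abs_of_nonpos (by linarith)]
                ring
              rw [h10] at hphi
              linarith
            have heq : s₀*(φ t) - (K:ℝ)*s₀*t + s₀*(-(φ y₀) + K*y₀ + C₀)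
                = s₀*((φ t - φ y₀) + K*(y₀ - t) + C₀) := by ring
            rw [heq]
            apply mul_nonneg (le_of_lt hs₀pos)
            linarith
          · apply hW₁ q
            rw [hq1, hq2t, ha₁def]
            have heq : s₀*(φ t) + (K:ℝ)*s₀*t + s₀*(-(φ y₀) - K*y₀ + C₀)
                = s₀*((φ t - φ y₀) + K*(t - y₀) + C₀) := by ring
            rw [heq]
            apply mul_nonneg (le_of_lt hs₀pos)
            rcases le_or_gt t (-1) with ht1 | ht1
            · have hphi := hKdist t y₀ ht1 hy₀1
              have h8 : φ y₀ - φ t ≤ K*(t - y₀) := by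
                have h9 : -(φ t - φ y₀) ≤ |φ t - φ y₀| := neg_le_abs _
                have h10 : |t - y₀| = t - y₀ := abs_of_nonneg (by linarith)
                rw [h10] at hphi
                linarith
              linarith
            · have h8 : M₁ < φ t := hφlow t ht0
              have hphi := hKdist y₀ (-1) hy₀1 le_rfl
              have h9 : φ y₀ - φ (-1) ≤ K*(-1 - y₀) := by
                have h10 : φ y₀ - φ (-1) ≤ |φ y₀ - φ (-1)| := le_abs_self _
                have h11 : |y₀ - (-1)| = -1 - y₀ := by
                  rw [abs_of_nonpos (by linarith)]
                  ring
                rw [h11] at hphi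
                linarith
              have h12 : 0 ≤ (K:ℝ)*(t+1) := mul_nonneg hKnn (by linarith)
              have h13 : -|M₁| ≤ M₁ := neg_abs_le M₁
              have h14 : φ (-1) ≤ |φ (-1)| := le_abs_self _
              rw [hC₀def]
              linarith
        have hσ0 : σ*(Real.exp q.2 - 1) ≤ 0 := aux_sig hσpos (Real.exp_le_one_iff.mpr hq2)
        have hη0 : η*q.2 ≤ 0 := aux_eta hηpos hq2
        have hFq : F q ≤ 0 := by
          have hFform : F q = (W q - u q.1 q.2) + (η*q.2 + σ*(Real.exp q.2 - 1)) := by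
            rw [hFdef]
          rw [hFform, ← hq0]
          linarith
        linarith
      · -- interior maximum: contradiction with the strong equation
        have hqpos : q ∈ posSet u := ⟨hq2, hqupos⟩
        have hqV : q ∈ V := by
          have h5 := hqpos
          rw [hVeq] at h5
          exact h5.1
        set O := V ∩ {p : ℝ×ℝ | p.2 < 0} with hOdef
        have hOopen : IsOpen O := hVopen.inter hOpenNeg
        have hOq : q ∈ O := ⟨hqV, hq2neg⟩
        have hOsub : O ⊆ posSet u ∩ {p : ℝ×ℝ | p.2 < 0} := fun p hp => ⟨hVsub hp, hp.2⟩
        have hml : IsLocalMax F q := by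
          filter_upwards [hOopen.mem_nhds hOq] with p hp
          exact hqmaxS p (subset_closure (hVsub hp))
        set U : ℝ×ℝ → ℝ := fun p => u p.1 p.2 with hUdef
        have hsm : ContDiffOn ℝ 2 U O := hu.smooth.mono hOsub
        have hsmO : ∀ p ∈ O, ContDiffAt ℝ 2 U p := fun p hp => hsm.contDiffAt (hOopen.mem_nhds hp)
        have hUdiff : ∀ p ∈ O, DifferentiableAt ℝ U p := fun p hp =>
          (hsmO p hp).differentiableAt (by norm_num)
        have hslx : ∀ p ∈ O, HasDerivAt (fun t => u t p.2) (fderiv ℝ U p ((1:ℝ),(0:ℝ))) p.1 := by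
          intro p hp
          have h1 : HasDerivAt (fun t : ℝ => ((t, p.2) : ℝ×ℝ)) ((1:ℝ),(0:ℝ)) p.1 :=
            (hasDerivAt_id p.1).prodMk (hasDerivAt_const p.1 p.2)
          have h2 := (hUdiff p hp).hasFDerivAt.comp_hasDerivAt p.1 h1
          exact h2
        have hsly : ∀ p ∈ O, HasDerivAt (fun t => u p.1 t) (fderiv ℝ U p ((0:ℝ),(1:ℝ))) p.2 := by
          intro p hp
          have h1 : HasDerivAt (fun t : ℝ => ((p.1, t) : ℝ×ℝ)) ((0:ℝ),(1:ℝ)) p.2 :=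
            (hasDerivAt_const p.2 p.1).prodMk (hasDerivAt_id p.2)
          have h2 := (hUdiff p hp).hasFDerivAt.comp_hasDerivAt p.2 h1
          exact h2
        have hpdx_eq : ∀ p ∈ O, pdx u p.1 p.2 = fderiv ℝ U p ((1:ℝ),(0:ℝ)) :=
          fun p hp => (hslx p hp).deriv
        have hpdy_eq : ∀ p ∈ O, pdy u p.1 p.2 = fderiv ℝ U p ((0:ℝ),(1:ℝ)) :=
          fun p hp => (hsly p hp).deriv
        have hux : ∀ p ∈ O, HasDerivAt (fun t => u t p.2) (pdx u p.1 p.2) p.1 := by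
          intro p hp; rw [hpdx_eq p hp]; exact hslx p hp
        have huy : ∀ p ∈ O, HasDerivAt (fun t => u p.1 t) (pdy u p.1 p.2) p.2 := by
          intro p hp; rw [hpdy_eq p hp]; exact hsly p hp
        have hfd : ContDiffAt ℝ 1 (fderiv ℝ U) q := (hsmO q hOq).fderiv_right (by norm_num)
        have hfdd : DifferentiableAt ℝ (fderiv ℝ U) q := hfd.differentiableAt one_ne_zero
        have hevx : ∀ᶠ t in 𝓝 q.1, ((t, q.2) : ℝ×ℝ) ∈ O := by
          have hc : ContinuousAt (fun t : ℝ => ((t, q.2) : ℝ×ℝ)) q.1 := by fun_prop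
          exact hc (hOopen.mem_nhds hOq)
        have hevy : ∀ᶠ t in 𝓝 q.2, ((q.1, t) : ℝ×ℝ) ∈ O := by
          have hc : ContinuousAt (fun t : ℝ => ((q.1, t) : ℝ×ℝ)) q.2 := by fun_prop
          exact hc (hOopen.mem_nhds hOq)
        have hgx : DifferentiableAt ℝ (fun t => fderiv ℝ U (t, q.2) ((1:ℝ),(0:ℝ))) q.1 := by
          have h1 : DifferentiableAt ℝ (fun t : ℝ => ((t, q.2) : ℝ×ℝ)) q.1 :=
            differentiableAt_id.prodMk (differentiableAt_const _)
          have h2 : DifferentiableAt ℝ (fun t : ℝ => fderiv ℝ U (t, q.2)) q.1 := hfdd.comp q.1 h1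
          exact (ContinuousLinearMap.apply ℝ ℝ ((1:ℝ),(0:ℝ))).differentiableAt.comp q.1 h2
        have hgy : DifferentiableAt ℝ (fun t => fderiv ℝ U (q.1, t) ((0:ℝ),(1:ℝ))) q.2 := by
          have h1 : DifferentiableAt ℝ (fun t : ℝ => ((q.1, t) : ℝ×ℝ)) q.2 :=
            (differentiableAt_const _).prodMk differentiableAt_id
          have h2 : DifferentiableAt ℝ (fun t : ℝ => fderiv ℝ U (q.1, t)) q.2 := hfdd.comp q.2 h1
          exact (ContinuousLinearMap.apply ℝ ℝ ((0:ℝ),(1:ℝ))).differentiableAt.comp q.2 h2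
        have hdx : DifferentiableAt ℝ (fun t => pdx u t q.2) q.1 := by
          apply hgx.congr_of_eventuallyEq
          filter_upwards [hevx] with t ht using hpdx_eq (t, q.2) ht
        have hdy : DifferentiableAt ℝ (fun t => pdy u q.1 t) q.2 := by
          apply hgy.congr_of_eventuallyEq
          filter_upwards [hevy] with t ht using hpdy_eq (q.1, t) ht
        have hxx : HasDerivAt (fun t => pdx u t q.2) (pdxx u q.1 q.2) q.1 := hdx.hasDerivAt
        have hyy : HasDerivAt (fun t => pdy u q.1 t) (pdyy u q.1 q.2) q.2 := hdy.hasDerivAt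
        -- horizontal slice of the explicit subsolution
        have hWxs : ∀ t : ℝ, HasDerivAt (fun s : ℝ => W (s, q.2))
            (-((1-ε₁) * (s₀ * Real.exp (s₀*t + K*s₀*q.2 + a₁)
              + s₀ * Real.exp (s₀*t - K*s₀*q.2 + a₂)))) t := by
          intro t
          have h1 : HasDerivAt (fun s : ℝ => s₀*s + (K:ℝ)*s₀*q.2 + a₁) s₀ t := by
            simpa using (((hasDerivAt_id t).const_mul s₀).add_const ((K:ℝ)*s₀*q.2)).add_const a₁
          have h2 : HasDerivAt (fun s : ℝ => s₀*s - (K:ℝ)*s₀*q.2 + a₂) s₀ t := by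
            simpa using (((hasDerivAt_id t).const_mul s₀).sub_const ((K:ℝ)*s₀*q.2)).add_const a₂
          have h3 := (((hasDerivAt_const t (1:ℝ)).sub h1.exp).sub h2.exp).const_mul (1-ε₁)
          simp only [hWdef]
          refine h3.congr_deriv ?_
          ring
        have hWxxs : HasDerivAt (fun t : ℝ =>
            -((1-ε₁) * (s₀ * Real.exp (s₀*t + K*s₀*q.2 + a₁)
              + s₀ * Real.exp (s₀*t - K*s₀*q.2 + a₂))))
            (-((1-ε₁) * (s₀*(s₀*Real.exp (s₀*q.1 + K*s₀*q.2 + a₁))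
              + s₀*(s₀*Real.exp (s₀*q.1 - K*s₀*q.2 + a₂))))) q.1 := by
          have h1 : HasDerivAt (fun s : ℝ => s₀*s + (K:ℝ)*s₀*q.2 + a₁) s₀ q.1 := by
            simpa using (((hasDerivAt_id q.1).const_mul s₀).add_const ((K:ℝ)*s₀*q.2)).add_const a₁
          have h2 : HasDerivAt (fun s : ℝ => s₀*s - (K:ℝ)*s₀*q.2 + a₂) s₀ q.1 := by
            simpa using (((hasDerivAt_id q.1).const_mul s₀).sub_const ((K:ℝ)*s₀*q.2)).add_const a₂
          have h3 := (((h1.exp.const_mul s₀).add (h2.exp.const_mul s₀)).const_mul (1-ε₁)).neg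
          refine h3.congr_deriv ?_
          ring
        -- vertical slice of the explicit subsolution
        have hWys : ∀ t : ℝ, HasDerivAt (fun s : ℝ => W (q.1, s))
            ((1-ε₁) * ((K:ℝ)*s₀*Real.exp (s₀*q.1 - K*s₀*t + a₂)
              - (K:ℝ)*s₀*Real.exp (s₀*q.1 + K*s₀*t + a₁))) t := by
          intro t
          have h1 : HasDerivAt (fun s : ℝ => s₀*q.1 + (K:ℝ)*s₀*s + a₁) ((K:ℝ)*s₀) t := by
            simpa using (((hasDerivAt_id t).const_mul ((K:ℝ)*s₀)).const_add (s₀*q.1)).add_const a₁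
          have h2 : HasDerivAt (fun s : ℝ => s₀*q.1 - (K:ℝ)*s₀*s + a₂) (-((K:ℝ)*s₀)) t := by
            simpa using (((hasDerivAt_id t).const_mul ((K:ℝ)*s₀)).const_sub (s₀*q.1)).add_const a₂
          have h3 := (((hasDerivAt_const t (1:ℝ)).sub h1.exp).sub h2.exp).const_mul (1-ε₁)
          simp only [hWdef]
          refine h3.congr_deriv ?_
          ring
        have hWyys : HasDerivAt (fun t : ℝ =>
            (1-ε₁) * ((K:ℝ)*s₀*Real.exp (s₀*q.1 - K*s₀*t + a₂)
              - (K:ℝ)*s₀*Real.exp (s₀*q.1 + K*s₀*t + a₁)))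
            (-((1-ε₁) * ((K:ℝ)*s₀*((K:ℝ)*s₀*Real.exp (s₀*q.1 + K*s₀*q.2 + a₁))
              + (K:ℝ)*s₀*((K:ℝ)*s₀*Real.exp (s₀*q.1 - K*s₀*q.2 + a₂))))) q.2 := by
          have h1 : HasDerivAt (fun s : ℝ => s₀*q.1 + (K:ℝ)*s₀*s + a₁) ((K:ℝ)*s₀) q.2 := by
            simpa using (((hasDerivAt_id q.2).const_mul ((K:ℝ)*s₀)).const_add (s₀*q.1)).add_const a₁
          have h2 : HasDerivAt (fun s : ℝ => s₀*q.1 - (K:ℝ)*s₀*s + a₂) (-((K:ℝ)*s₀)) q.2 := by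
            simpa using (((hasDerivAt_id q.2).const_mul ((K:ℝ)*s₀)).const_sub (s₀*q.1)).add_const a₂
          have h3 := ((h2.exp.const_mul ((K:ℝ)*s₀)).sub (h1.exp.const_mul ((K:ℝ)*s₀))).const_mul (1-ε₁)
          refine h3.congr_deriv ?_
          ring
        -- slices of F
        have hf₁ : ∀ t : ℝ, ((t, q.2) : ℝ×ℝ) ∈ O → HasDerivAt (fun s => F (s, q.2))
            (-((1-ε₁) * (s₀ * Real.exp (s₀*t + K*s₀*q.2 + a₁)
              + s₀ * Real.exp (s₀*t - K*s₀*q.2 + a₂))) - pdx u t q.2) t := by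
          intro t ht
          have h4 := ((hWxs t).sub (hux (t, q.2) ht)).add_const (η*q.2 + σ*(Real.exp q.2 - 1))
          simp only [hFdef]
          exact h4
        have hf₂ : ∀ t : ℝ, ((q.1, t) : ℝ×ℝ) ∈ O → HasDerivAt (fun s => F (q.1, s))
            ((1-ε₁) * ((K:ℝ)*s₀*Real.exp (s₀*q.1 - K*s₀*t + a₂)
              - (K:ℝ)*s₀*Real.exp (s₀*q.1 + K*s₀*t + a₁)) - pdy u q.1 t
              + (η + σ*Real.exp t)) t := by
          intro t ht
          have hlin : HasDerivAt (fun s : ℝ => η*s + σ*(Real.exp s - 1)) (η + σ*Real.exp t) t := by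
            have h5 := ((hasDerivAt_id t).const_mul η).add
              (((Real.hasDerivAt_exp t).sub_const 1).const_mul σ)
            refine h5.congr_deriv ?_
            simp
          have h4 := ((hWys t).sub (huy (q.1, t) ht)).add hlin
          simp only [hFdef]
          exact h4
        -- local maxima along the two axis directions
        have hml₁ : IsLocalMax (fun s => F (s, q.2)) q.1 := by
          have hc : ContinuousAt (fun t : ℝ => ((t, q.2) : ℝ×ℝ)) q.1 := by fun_prop
          exact hc.eventually hml
        have hml₂ : IsLocalMax (fun s => F (q.1, s)) q.2 := by
          have hc : ContinuousAt (fun t : ℝ => ((q.1, t) : ℝ×ℝ)) q.2 := by fun_prop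
          exact hc.eventually hml
        have hdiff₁ : ∀ᶠ t in 𝓝 q.1, DifferentiableAt ℝ (fun s => F (s, q.2)) t := by
          filter_upwards [hevx] with t ht using (hf₁ t ht).differentiableAt
        have hdiff₂ : ∀ᶠ t in 𝓝 q.2, DifferentiableAt ℝ (fun s => F (q.1, s)) t := by
          filter_upwards [hevy] with t ht using (hf₂ t ht).differentiableAt
        have H1 : deriv (fun s => F (s, q.2)) =ᶠ[𝓝 q.1]
            (fun t => -((1-ε₁) * (s₀ * Real.exp (s₀*t + K*s₀*q.2 + a₁)
              + s₀ * Real.exp (s₀*t - K*s₀*q.2 + a₂))) - pdx u t q.2) := by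
          filter_upwards [hevx] with t ht using (hf₁ t ht).deriv
        have H2 : deriv (fun s => F (q.1, s)) =ᶠ[𝓝 q.2]
            (fun t => (1-ε₁) * ((K:ℝ)*s₀*Real.exp (s₀*q.1 - K*s₀*t + a₂)
              - (K:ℝ)*s₀*Real.exp (s₀*q.1 + K*s₀*t + a₁)) - pdy u q.1 t
              + (η + σ*Real.exp t)) := by
          filter_upwards [hevy] with t ht using (hf₂ t ht).deriv
        have Hg₁ : HasDerivAt (fun t => -((1-ε₁) * (s₀ * Real.exp (s₀*t + K*s₀*q.2 + a₁)
              + s₀ * Real.exp (s₀*t - K*s₀*q.2 + a₂))) - pdx u t q.2)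
            (-((1-ε₁) * (s₀*(s₀*Real.exp (s₀*q.1 + K*s₀*q.2 + a₁))
              + s₀*(s₀*Real.exp (s₀*q.1 - K*s₀*q.2 + a₂)))) - pdxx u q.1 q.2) q.1 :=
          hWxxs.sub hxx
        have Hg₂ : HasDerivAt (fun t => (1-ε₁) * ((K:ℝ)*s₀*Real.exp (s₀*q.1 - K*s₀*t + a₂)
              - (K:ℝ)*s₀*Real.exp (s₀*q.1 + K*s₀*t + a₁)) - pdy u q.1 t
              + (η + σ*Real.exp t))
            (-((1-ε₁) * ((K:ℝ)*s₀*((K:ℝ)*s₀*Real.exp (s₀*q.1 + K*s₀*q.2 + a₁))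
              + (K:ℝ)*s₀*((K:ℝ)*s₀*Real.exp (s₀*q.1 - K*s₀*q.2 + a₂))))
              - pdyy u q.1 q.2 + σ*Real.exp q.2) q.2 := by
          have hlin' : HasDerivAt (fun t : ℝ => η + σ*Real.exp t) (σ*Real.exp q.2) q.2 := by
            simpa using ((Real.hasDerivAt_exp q.2).const_mul σ).const_add η
          exact (hWyys.sub hyy).add hlin'
        have Hd2x := Hg₁.congr_of_eventuallyEq H1
        have Hd2y := Hg₂.congr_of_eventuallyEq H2
        have h2x := sd_test hml₁ hdiff₁ Hd2x
        have h2y := sd_test hml₂ hdiff₂ Hd2y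
        have h1x : -((1-ε₁) * (s₀*Real.exp (s₀*q.1 + K*s₀*q.2 + a₁)
            + s₀*Real.exp (s₀*q.1 - K*s₀*q.2 + a₂))) - pdx u q.1 q.2 = 0 := by
          have ha := hml₁.deriv_eq_zero
          have hb := (hf₁ q.1 hOq).deriv
          rw [ha] at hb
          linarith [hb]
        have hpde := hu.pde q ⟨hqpos, hq2neg⟩
        have hWpde : -d * ((-((1-ε₁) * (s₀*(s₀*Real.exp (s₀*q.1 + K*s₀*q.2 + a₁))
              + s₀*(s₀*Real.exp (s₀*q.1 - K*s₀*q.2 + a₂)))))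
              + (-((1-ε₁) * ((K:ℝ)*s₀*((K:ℝ)*s₀*Real.exp (s₀*q.1 + K*s₀*q.2 + a₁))
              + (K:ℝ)*s₀*((K:ℝ)*s₀*Real.exp (s₀*q.1 - K*s₀*q.2 + a₂))))))
            + c * (-((1-ε₁) * (s₀*Real.exp (s₀*q.1 + K*s₀*q.2 + a₁)
              + s₀*Real.exp (s₀*q.1 - K*s₀*q.2 + a₂)))) = 0 := by
          linear_combination ((1-ε₁) * (Real.exp (s₀*q.1 + K*s₀*q.2 + a₁)
            + Real.exp (s₀*q.1 - K*s₀*q.2 + a₂)) * s₀) * hs₀id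
        have hσe : 0 < σ * Real.exp q.2 := mul_pos hσpos (Real.exp_pos _)
        have hpx : c * (-((1-ε₁) * (s₀*Real.exp (s₀*q.1 + K*s₀*q.2 + a₁)
            + s₀*Real.exp (s₀*q.1 - K*s₀*q.2 + a₂)))) = c * pdx u q.1 q.2 := by
          have h16 : -((1-ε₁) * (s₀*Real.exp (s₀*q.1 + K*s₀*q.2 + a₁)
              + s₀*Real.exp (s₀*q.1 - K*s₀*q.2 + a₂))) = pdx u q.1 q.2 := by linarith [h1x]
          rw [h16]
        have hsum2 := add_le_add h2x h2y
        have hdsum := mul_le_mul_of_nonneg_left hsum2 (le_of_lt hd)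
        simp only [add_zero, mul_zero] at hdsum
        have key : d * ((-((1-ε₁) * (s₀*(s₀*Real.exp (s₀*q.1 + K*s₀*q.2 + a₁))
              + s₀*(s₀*Real.exp (s₀*q.1 - K*s₀*q.2 + a₂)))) - pdxx u q.1 q.2)
            + (-((1-ε₁) * ((K:ℝ)*s₀*((K:ℝ)*s₀*Real.exp (s₀*q.1 + K*s₀*q.2 + a₁))
              + (K:ℝ)*s₀*((K:ℝ)*s₀*Real.exp (s₀*q.1 - K*s₀*q.2 + a₂))))
              - pdyy u q.1 q.2 + σ*Real.exp q.2))
            = d * (σ * Real.exp q.2) := by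
          linear_combination (-1 : ℝ) * hWpde + hpde + hpx
        rw [key] at hdsum
        exact absurd hdsum (not_le.mpr (mul_pos hd hσe))
  -- conclusion
  have hE₀ : s₀*x₀ + K*s₀*y₀ + a₁ = s₀*(x₀ - φ y₀ + C₀) := by rw [ha₁def]; ring
  have hE₀' : s₀*x₀ - K*s₀*y₀ + a₂ = s₀*(x₀ - φ y₀ + C₀) := by rw [ha₂def]; ring
  have hexp₀ : Real.exp (s₀*(x₀ - φ y₀ + C₀)) ≤ ε/4 := by
    calc Real.exp (s₀*(x₀ - φ y₀ + C₀)) ≤ Real.exp (s₀*(C₀ - R)) := by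
          apply Real.exp_le_exp.mpr
          apply mul_le_mul_of_nonneg_left _ (le_of_lt hs₀pos)
          linarith
      _ ≤ ε/4 := hRδ
  have hWX₀ : (1-ε₁) * (1 - 2*(ε/4)) ≤ W (x₀,y₀) := by
    simp only [hWdef]
    rw [hE₀, hE₀']
    exact aux_WX0 hexp₀ hexp₀ hε₁1
  have hfinal : 1 - ε ≤ (1-ε₁) * (1 - 2*(ε/4)) := by
    rw [hε₁def]
    exact aux_final hε hε1
  linarith
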